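/- Vanishing cross-correlation of Tyler-normalized samples: Let p ≥ 2, let w_1, w_2 be independent random vectors uniformly distributed on the unit sphere S^{p-1} ⊂ ℝ^p, let Ω be a positive definite real symmetric p × p matrix, and set x_i = Ω^{1/2} w_i / ‖Ω^{1/2} w_i‖ for i = 1,2. Let (T_n) be a sequence of random positive definite p × p matrices on the same probability space with T_n → Ω almost surely (entrywise), and set t_{ni} = T_n^{-1/2} x_i / ‖T_n^{-1/2} x_i‖. Then the matrix of expectations E[t_{n1} t_{n2}ᵀ] converges to the zero p × p matrix as n → ∞. -/

import Mathlib

open Matrix MeasureTheory ProbabilityTheory Filter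

/-- The Euclidean norm of a vector in `ℝ^p`. -/
noncomputable def euclNorm {p : ℕ} (v : Fin p → ℝ) : ℝ :=
  Real.sqrt (∑ i, v i ^ 2)

/-- `μ` is the uniform probability measure on the unit sphere `S^{p-1} ⊂ ℝ^p`:
a probability measure concentrated on the unit sphere and invariant under every
orthogonal transformation. -/
def IsUniformOnSphere (p : ℕ) (μ : Measure (Fin p → ℝ)) : Prop :=
  IsProbabilityMeasure μ ∧ μ {w | euclNorm w = 1} = 1 ∧
    ∀ O : Matrix (Fin p) (Fin p) ℝ, Oᵀ * O = 1 →
      Measure.map (fun w => O *ᵥ w) μ = μ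

open scoped Classical

/-- The square root of a positive semidefinite matrix, as defined in Mathlib (Dec 2024)
under this name (removed since): `U * diag (√λ) * U⋆` with `U` the eigenvector unitary. -/
noncomputable def Matrix.PosSemidef.sqrt {n 𝕜 : Type*} [Fintype n] [RCLike 𝕜] [PartialOrder 𝕜] [DecidableEq n]
    {A : Matrix n n 𝕜} (hA : A.PosSemidef) : Matrix n n 𝕜 :=
  hA.1.eigenvectorUnitary.1 * diagonal ((↑) ∘ (√·) ∘ hA.1.eigenvalues) *
    (star hA.1.eigenvectorUnitary : Matrix n n 𝕜)

/-- For a positive definite matrix `T`, the map `v ↦ T^{-1/2} v / ‖T^{-1/2} v‖`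
(junk value `0` if `T` is not positive definite). -/
noncomputable def tylerNormalize {p : ℕ} (T : Matrix (Fin p) (Fin p) ℝ)
    (v : Fin p → ℝ) : Fin p → ℝ :=
  if h : T.PosDef then
    (euclNorm ((h.posSemidef.sqrt)⁻¹ *ᵥ v))⁻¹ • ((h.posSemidef.sqrt)⁻¹ *ᵥ v)
  else 0

/-! ### Auxiliary lemmas -/

open Topology

section EuclNorm

variable {p : ℕ}

lemma euclNorm_nonneg (v : Fin p → ℝ) : 0 ≤ euclNorm v := Real.sqrt_nonneg _

lemma euclNorm_eq_zero_iff (v : Fin p → ℝ) : euclNorm v = 0 ↔ v = 0 := by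
  unfold euclNorm
  rw [Real.sqrt_eq_zero (by positivity)]
  constructor
  · intro h
    funext i
    have := (Finset.sum_eq_zero_iff_of_nonneg
      (fun i _ => sq_nonneg (v i))).mp h i (Finset.mem_univ i)
    exact pow_eq_zero_iff (by norm_num) |>.mp this
  · rintro rfl; simp

lemma continuous_euclNorm : Continuous (euclNorm (p := p)) := by
  unfold euclNorm
  exact Real.continuous_sqrt.comp (by continuity)

lemma abs_le_euclNorm (v : Fin p → ℝ) (i : Fin p) : |v i| ≤ euclNorm v := by
  rw [← Real.sqrt_sq_eq_abs]
  exact Real.sqrt_le_sqrt (Finset.single_le_sum (fun j _ => sq_nonneg (v j)) (Finset.mem_univ i))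

lemma euclNorm_smul (c : ℝ) (v : Fin p → ℝ) : euclNorm (c • v) = |c| * euclNorm v := by
  unfold euclNorm
  have : ∑ i, (c • v) i ^ 2 = c ^ 2 * ∑ i, v i ^ 2 := by
    rw [Finset.mul_sum]; congr 1; funext i; simp [mul_pow, mul_comm]
  rw [this, Real.sqrt_mul (sq_nonneg c), Real.sqrt_sq_eq_abs]

end EuclNorm

section SqrtFun

variable {p : ℕ}

open scoped MatrixOrder in
lemma psd_sqrt_eq_cfc {M : Matrix (Fin p) (Fin p) ℝ} (h : M.PosSemidef) :
    h.sqrt = CFC.sqrt M := by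
  rw [CFC.sqrt_eq_cfc, cfc_nnreal_eq_real _ M, h.1.cfc_eq]
  simp only [Matrix.PosSemidef.sqrt, IsHermitian.cfc, Unitary.conjStarAlgAut_apply]
  unfold Real.sqrt
  rfl

open scoped MatrixOrder in
lemma Matrix.PosSemidef.posSemidef_sqrt {M : Matrix (Fin p) (Fin p) ℝ} (h : M.PosSemidef) :
    h.sqrt.PosSemidef := by
  rw [psd_sqrt_eq_cfc h, ← Matrix.nonneg_iff_posSemidef]
  exact CFC.sqrt_nonneg M

open scoped MatrixOrder in
lemma Matrix.PosSemidef.sqrt_mul_self {M : Matrix (Fin p) (Fin p) ℝ} (h : M.PosSemidef) :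
    h.sqrt * h.sqrt = M := by
  rw [psd_sqrt_eq_cfc h]
  exact CFC.sqrt_mul_sqrt_self M (Matrix.nonneg_iff_posSemidef.mpr h)

open scoped MatrixOrder in
lemma Matrix.PosSemidef.eq_sqrt_of_sq_eq {S M : Matrix (Fin p) (Fin p) ℝ} (hS : S.PosSemidef)
    (h : M.PosSemidef) (hsq : S ^ 2 = M) : S = h.sqrt := by
  rw [psd_sqrt_eq_cfc h]
  exact (CFC.sqrt_unique (by rw [← sq]; exact hsq) (Matrix.nonneg_iff_posSemidef.mpr hS)).symm

/-- Total version of the positive semidefinite square root. -/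
noncomputable def sqrtFun (M : Matrix (Fin p) (Fin p) ℝ) : Matrix (Fin p) (Fin p) ℝ :=
  if h : M.PosSemidef then h.sqrt else 0

lemma sqrtFun_eq {M : Matrix (Fin p) (Fin p) ℝ} (h : M.PosSemidef) :
    sqrtFun M = h.sqrt := dif_pos h

lemma sqrtFun_posSemidef {M : Matrix (Fin p) (Fin p) ℝ} (h : M.PosSemidef) :
    (sqrtFun M).PosSemidef := by rw [sqrtFun_eq h]; exact h.posSemidef_sqrt

lemma sqrtFun_mul_self {M : Matrix (Fin p) (Fin p) ℝ} (h : M.PosSemidef) :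
    sqrtFun M * sqrtFun M = M := by rw [sqrtFun_eq h]; exact h.sqrt_mul_self

lemma posSemidef_symm_entries {S : Matrix (Fin p) (Fin p) ℝ} (hS : S.PosSemidef)
    (i j : Fin p) : S j i = S i j := by
  have := hS.1
  rw [Matrix.IsHermitian] at this
  conv_rhs => rw [← this]
  simp [Matrix.conjTranspose_apply]

lemma sq_entry_le_diag {M : Matrix (Fin p) (Fin p) ℝ} (h : M.PosSemidef)
    (i j : Fin p) : (sqrtFun M i j) ^ 2 ≤ M i i := by
  have hS := sqrtFun_posSemidef h
  have hM : M i i = ∑ k, (sqrtFun M i k) ^ 2 := by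
    conv_lhs => rw [← sqrtFun_mul_self h]
    rw [Matrix.mul_apply]
    congr 1; funext k
    rw [posSemidef_symm_entries hS k i, sq]
  rw [hM]
  exact Finset.single_le_sum (f := fun k => sqrtFun M i k ^ 2)
    (fun k _ => sq_nonneg _) (Finset.mem_univ j)

lemma posSemidef_of_tendsto {u : ℕ → Matrix (Fin p) (Fin p) ℝ}
    {S : Matrix (Fin p) (Fin p) ℝ} (hu : ∀ n, (u n).PosSemidef)
    (h : Tendsto u atTop (𝓝 S)) : S.PosSemidef := by
  rw [Matrix.posSemidef_iff_dotProduct_mulVec]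
  constructor
  · have h1 : Tendsto (fun n => (u n)ᴴ) atTop (𝓝 Sᴴ) :=
      ((continuous_id.matrix_conjTranspose (R := ℝ)).tendsto S).comp h
    have h2 : (fun n => (u n)ᴴ) = u := funext fun n => (hu n).1
    rw [h2] at h1
    exact tendsto_nhds_unique h1 h
  · intro x
    have h1 : Tendsto (fun n => star x ⬝ᵥ (u n) *ᵥ x) atTop (𝓝 (star x ⬝ᵥ S *ᵥ x)) :=
      ((continuous_const.dotProduct (continuous_id.matrix_mulVec
        continuous_const)).tendsto S).comp h
    exact ge_of_tendsto' h1 fun n => (hu n).dotProduct_mulVec_nonneg x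

/-- Continuity of the matrix square root along sequences of positive semidefinite matrices. -/
lemma tendsto_sqrtFun {M : ℕ → Matrix (Fin p) (Fin p) ℝ}
    {A : Matrix (Fin p) (Fin p) ℝ} (hM : ∀ n, (M n).PosSemidef) (hA : A.PosSemidef)
    (h : Tendsto M atTop (𝓝 A)) :
    Tendsto (fun n => sqrtFun (M n)) atTop (𝓝 (sqrtFun A)) := by
  have hBi : ∀ i : Fin p, ∃ Bi : ℝ, ∀ n, M n i i ≤ Bi := by
    intro i
    have : Tendsto (fun n => M n i i) atTop (𝓝 (A i i)) := by
      have := tendsto_pi_nhds.mp h i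
      exact tendsto_pi_nhds.mp this i
    obtain ⟨b, hb⟩ := this.bddAbove_range
    exact ⟨b, fun n => hb (Set.mem_range_self n)⟩
  choose B hB using hBi
  set D : ℝ := ∑ i, max (B i) 0 with hD
  have hDnn : ∀ n i, M n i i ≤ D := by
    intro n i
    calc M n i i ≤ B i := hB i n
    _ ≤ max (B i) 0 := le_max_left _ _
    _ ≤ D := Finset.single_le_sum (f := fun k => max (B k) 0)
      (fun k _ => le_max_right _ _) (Finset.mem_univ i)
  set C : ℝ := Real.sqrt D with hC
  have hbound : ∀ n i j, |sqrtFun (M n) i j| ≤ C := by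
    intro n i j
    rw [← Real.sqrt_sq_eq_abs]
    exact Real.sqrt_le_sqrt ((sq_entry_le_diag (hM n) i j).trans (hDnn n i))
  apply tendsto_of_subseq_tendsto
  intro ns hns
  set K : Set (Matrix (Fin p) (Fin p) ℝ) :=
    Set.univ.pi (fun _ : Fin p => Set.univ.pi fun _ : Fin p => Set.Icc (-C) C) with hK
  have hKc : IsCompact K :=
    isCompact_univ_pi fun i => isCompact_univ_pi fun j => isCompact_Icc
  have hmem : ∀ k, sqrtFun (M (ns k)) ∈ K := by
    intro k i _ j _
    exact abs_le.mp (hbound (ns k) i j)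
  haveI : FirstCountableTopology (Matrix (Fin p) (Fin p) ℝ) :=
    inferInstanceAs (FirstCountableTopology (Fin p → Fin p → ℝ))
  obtain ⟨S, _, ms, hmono, hlim⟩ := hKc.tendsto_subseq hmem
  refine ⟨ms, ?_⟩
  have hS : S.PosSemidef :=
    posSemidef_of_tendsto (fun k => sqrtFun_posSemidef (hM (ns (ms k)))) hlim
  have hMsub : Tendsto (fun k => M (ns (ms k))) atTop (𝓝 A) :=
    h.comp (hns.comp hmono.tendsto_atTop)
  have hsq : Tendsto (fun k => sqrtFun (M (ns (ms k))) * sqrtFun (M (ns (ms k)))) atTop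
      (𝓝 (S * S)) := by
    have : Continuous (fun N : Matrix (Fin p) (Fin p) ℝ => N * N) :=
      continuous_id.matrix_mul continuous_id
    exact (this.tendsto S).comp hlim
  have heq : (fun k => sqrtFun (M (ns (ms k))) * sqrtFun (M (ns (ms k)))) =
      fun k => M (ns (ms k)) := funext fun k => sqrtFun_mul_self (hM _)
  rw [heq] at hsq
  have hSSA : S * S = A := tendsto_nhds_unique hsq hMsub
  have : S = sqrtFun A := by
    rw [sqrtFun_eq hA]
    exact hS.eq_sqrt_of_sq_eq hA (by rw [sq]; exact hSSA)
  rw [← this]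
  exact hlim

end SqrtFun

section Measurability

noncomputable instance matMeas (p : ℕ) : MeasurableSpace (Matrix (Fin p) (Fin p) ℝ) :=
  inferInstanceAs (MeasurableSpace (Fin p → Fin p → ℝ))

instance matBorel (p : ℕ) : BorelSpace (Matrix (Fin p) (Fin p) ℝ) :=
  inferInstanceAs (BorelSpace (Fin p → Fin p → ℝ))

variable {p : ℕ}

lemma isClosed_posSemidef : IsClosed {M : Matrix (Fin p) (Fin p) ℝ | M.PosSemidef} := by
  have : {M : Matrix (Fin p) (Fin p) ℝ | M.PosSemidef} =
      {M : Matrix (Fin p) (Fin p) ℝ | Mᴴ = M} ∩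
        ⋂ x : Fin p → ℝ, {M | 0 ≤ star x ⬝ᵥ M *ᵥ x} := by
    ext M
    simp only [Set.mem_setOf_eq, Set.mem_inter_iff, Set.mem_iInter, Matrix.posSemidef_iff_dotProduct_mulVec,
      Matrix.IsHermitian]
  rw [this]
  exact IsClosed.inter (isClosed_eq (continuous_id.matrix_conjTranspose) continuous_id)
    (isClosed_iInter fun x => isClosed_le continuous_const
      (continuous_const.dotProduct (continuous_id.matrix_mulVec continuous_const)))

lemma measurable_matrix_inv :
    Measurable (fun M : Matrix (Fin p) (Fin p) ℝ => M⁻¹) := by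
  have : (fun M : Matrix (Fin p) (Fin p) ℝ => M⁻¹) =
      fun M => Ring.inverse M.det • M.adjugate := by
    funext M; rw [Matrix.inv_def]
  rw [this]
  have hdet : Measurable fun M : Matrix (Fin p) (Fin p) ℝ => Ring.inverse M.det := by
    rw [Ring.inverse_eq_inv']
    exact measurable_inv.comp (continuous_id.matrix_det).measurable
  have hadj : Measurable fun M : Matrix (Fin p) (Fin p) ℝ => M.adjugate :=
    (continuous_id.matrix_adjugate).measurable
  apply measurable_pi_lambda
  intro i
  apply measurable_pi_lambda
  intro j
  have : (fun M : Matrix (Fin p) (Fin p) ℝ => (Ring.inverse M.det • M.adjugate) i j) =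
      fun M => Ring.inverse M.det * M.adjugate i j := by
    funext M; simp [Matrix.smul_apply]
  rw [this]
  exact hdet.mul (((measurable_pi_apply j).comp ((measurable_pi_apply i).comp hadj)))

lemma continuous_restrict_sqrtFun :
    Continuous (Set.restrict {M : Matrix (Fin p) (Fin p) ℝ | M.PosSemidef} sqrtFun) := by
  haveI : FirstCountableTopology (Matrix (Fin p) (Fin p) ℝ) :=
    inferInstanceAs (FirstCountableTopology (Fin p → Fin p → ℝ))
  apply SeqContinuous.continuous
  intro u a hu
  have h1 : Tendsto (fun n => (u n : Matrix (Fin p) (Fin p) ℝ)) atTop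
      (𝓝 (a : Matrix (Fin p) (Fin p) ℝ)) :=
    ((continuous_subtype_val.tendsto a).comp hu)
  exact tendsto_sqrtFun (fun n => (u n).2) a.2 h1

lemma measurable_sqrtFun_comp {α : Type*} [MeasurableSpace α]
    {f : α → Matrix (Fin p) (Fin p) ℝ} (hf : Measurable f)
    (h : ∀ a, (f a).PosSemidef) : Measurable fun a => sqrtFun (f a) := by
  have hs : MeasurableSet {M : Matrix (Fin p) (Fin p) ℝ | M.PosSemidef} :=
    isClosed_posSemidef.measurableSet
  have : (fun a => sqrtFun (f a)) =
      (Set.restrict {M : Matrix (Fin p) (Fin p) ℝ | M.PosSemidef} sqrtFun) ∘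
        (fun a => (⟨f a, h a⟩ : {M : Matrix (Fin p) (Fin p) ℝ | M.PosSemidef})) := rfl
  rw [this]
  exact (continuous_restrict_sqrtFun.measurable).comp (hf.subtype_mk)

lemma measurable_mulVec_comp {α : Type*} [MeasurableSpace α]
    {A : α → Matrix (Fin p) (Fin p) ℝ} {v : α → Fin p → ℝ}
    (hA : Measurable A) (hv : Measurable v) : Measurable fun a => A a *ᵥ v a := by
  apply measurable_pi_lambda
  intro i
  have : (fun a => (A a *ᵥ v a) i) = fun a => ∑ j, A a i j * v a j := by
    funext a; simp [Matrix.mulVec, dotProduct]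
  rw [this]
  apply Finset.measurable_sum
  intro j _
  exact (((measurable_pi_apply j).comp ((measurable_pi_apply i).comp hA))).mul
    ((measurable_pi_apply j).comp hv)

lemma measurable_normalize : Measurable (fun v : Fin p → ℝ => (euclNorm v)⁻¹ • v) := by
  apply measurable_pi_lambda
  intro i
  simp only [Pi.smul_apply, smul_eq_mul]
  exact (measurable_inv.comp continuous_euclNorm.measurable).mul (measurable_pi_apply i)

end Measurability

section Tyler

variable {p : ℕ}

lemma tylerNormalize_eq {T : Matrix (Fin p) (Fin p) ℝ} (h : T.PosDef) (v : Fin p → ℝ) :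
    tylerNormalize T v = (euclNorm ((sqrtFun T)⁻¹ *ᵥ v))⁻¹ • ((sqrtFun T)⁻¹ *ᵥ v) := by
  rw [tylerNormalize, dif_pos h, sqrtFun_eq h.posSemidef]

lemma abs_tylerNormalize_le (T : Matrix (Fin p) (Fin p) ℝ) (v : Fin p → ℝ) (i : Fin p) :
    |tylerNormalize T v i| ≤ 1 := by
  rw [tylerNormalize]
  split_ifs with h
  · set u := (h.posSemidef.sqrt)⁻¹ *ᵥ v with hu
    rcases eq_or_ne (euclNorm u) 0 with h0 | h0
    · have : u = 0 := (euclNorm_eq_zero_iff u).mp h0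
      simp [this]
    · have hpos : 0 < euclNorm u := lt_of_le_of_ne (euclNorm_nonneg u) (Ne.symm h0)
      have hle : |u i| ≤ euclNorm u := abs_le_euclNorm u i
      simp only [Pi.smul_apply, smul_eq_mul, abs_mul, abs_inv, abs_of_pos hpos]
      calc (euclNorm u)⁻¹ * |u i| ≤ (euclNorm u)⁻¹ * euclNorm u :=
        mul_le_mul_of_nonneg_left hle (inv_nonneg.mpr (le_of_lt hpos))
      _ = 1 := inv_mul_cancel₀ h0
  · simp

/-- The key pointwise convergence: Tyler normalization of `x = Ω^{1/2}w/‖Ω^{1/2}w‖` with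
estimated matrices `T n → Ω` converges back to `w`. -/
lemma tendsto_tyler {T : ℕ → Matrix (Fin p) (Fin p) ℝ} (hT : ∀ n, (T n).PosDef)
    {A : Matrix (Fin p) (Fin p) ℝ} (hA : A.PosDef) (hconv : Tendsto T atTop (𝓝 A))
    {w : Fin p → ℝ} (hw : euclNorm w = 1) :
    Tendsto (fun n => tylerNormalize (T n)
      ((euclNorm (hA.posSemidef.sqrt *ᵥ w))⁻¹ • (hA.posSemidef.sqrt *ᵥ w))) atTop (𝓝 w) := by
  set S := hA.posSemidef.sqrt with hSdef
  have hSfun : sqrtFun A = S := sqrtFun_eq hA.posSemidef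
  have hw0 : w ≠ 0 := by
    intro h0
    rw [h0] at hw
    rw [(euclNorm_eq_zero_iff (0 : Fin p → ℝ)).mpr rfl] at hw
    norm_num at hw
  have hdet : S.det ≠ 0 := by
    have hd : S.det * S.det = A.det := by
      rw [← Matrix.det_mul, hA.posSemidef.sqrt_mul_self]
    intro h0
    rw [h0, zero_mul] at hd
    exact (ne_of_gt hA.det_pos) hd.symm
  have hinv : S⁻¹ * S = 1 := Matrix.nonsing_inv_mul S (isUnit_iff_ne_zero.mpr hdet)
  have hSw : S *ᵥ w ≠ 0 := by
    intro h0
    apply hw0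
    have h1 := congrArg (fun v => S⁻¹ *ᵥ v) h0
    simpa [Matrix.mulVec_mulVec, hinv, Matrix.one_mulVec] using h1
  set c : ℝ := (euclNorm (S *ᵥ w))⁻¹ with hc
  have hcpos : 0 < c := by
    apply inv_pos.mpr
    rcases (euclNorm_nonneg (S *ᵥ w)).lt_or_eq with h | h
    · exact h
    · exact absurd ((euclNorm_eq_zero_iff _).mp h.symm) hSw
  set x : Fin p → ℝ := c • (S *ᵥ w) with hx
  have h1 : Tendsto (fun n => sqrtFun (T n)) atTop (𝓝 S) := by
    rw [← hSfun]
    exact tendsto_sqrtFun (fun n => (hT n).posSemidef) hA.posSemidef hconv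
  have h2 : Tendsto (fun n => (sqrtFun (T n))⁻¹) atTop (𝓝 S⁻¹) := by
    have hca : ContinuousAt Inv.inv S := by
      apply continuousAt_matrix_inv
      rw [Ring.inverse_eq_inv']
      exact continuousAt_inv₀ hdet
    exact hca.tendsto.comp h1
  have h3 : Tendsto (fun n => (sqrtFun (T n))⁻¹ *ᵥ x) atTop (𝓝 (S⁻¹ *ᵥ x)) := by
    have hcont : Continuous fun N : Matrix (Fin p) (Fin p) ℝ => N *ᵥ x :=
      continuous_id.matrix_mulVec continuous_const
    exact (hcont.tendsto _).comp h2
  have hux : S⁻¹ *ᵥ x = c • w := by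
    rw [hx, Matrix.mulVec_smul, Matrix.mulVec_mulVec, hinv, Matrix.one_mulVec]
  have hnorm : euclNorm (S⁻¹ *ᵥ x) = c := by
    rw [hux, euclNorm_smul, hw, abs_of_pos hcpos, mul_one]
  have h4 : Tendsto (fun n => (euclNorm ((sqrtFun (T n))⁻¹ *ᵥ x))⁻¹ • ((sqrtFun (T n))⁻¹ *ᵥ x))
      atTop (𝓝 ((euclNorm (S⁻¹ *ᵥ x))⁻¹ • (S⁻¹ *ᵥ x))) := by
    have hne : euclNorm (S⁻¹ *ᵥ x) ≠ 0 := by rw [hnorm]; exact ne_of_gt hcpos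
    have hc1 : ContinuousAt (fun v : Fin p → ℝ => (euclNorm v)⁻¹ • v) (S⁻¹ *ᵥ x) :=
      (continuous_euclNorm.continuousAt.inv₀ hne).smul continuousAt_id
    exact hc1.tendsto.comp h3
  have hval : (euclNorm (S⁻¹ *ᵥ x))⁻¹ • (S⁻¹ *ᵥ x) = w := by
    rw [hnorm, hux, smul_smul, inv_mul_cancel₀ (ne_of_gt hcpos), one_smul]
  rw [hval] at h4
  have h5 : Tendsto (fun n => tylerNormalize (T n) x) atTop (𝓝 w) := by
    have heq : (fun n => tylerNormalize (T n) x) =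
        fun n => (euclNorm ((sqrtFun (T n))⁻¹ *ᵥ x))⁻¹ • ((sqrtFun (T n))⁻¹ *ᵥ x) :=
      funext fun n => tylerNormalize_eq (hT n) x
    rw [heq]
    exact h4
  exact h5

end Tyler

/-- **Vanishing cross-correlation of Tyler-normalized samples.**  With `w₁, w₂` independent
uniform on `S^{p-1}`, `xᵢ = Ω^{1/2} wᵢ / ‖Ω^{1/2} wᵢ‖`, and `T n` random positive definite
matrices converging a.s. entrywise to `Ω`, the expectation matrix `E[tₙ₁ tₙ₂ᵀ]` of the
normalized vectors `tₙᵢ = (T n)^{-1/2} xᵢ / ‖(T n)^{-1/2} xᵢ‖` converges to zero. -/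
theorem tyler_cross_correlation_vanishes (p : ℕ) (hp : 2 ≤ p)
    {α : Type*} [MeasurableSpace α] (P : Measure α) [IsProbabilityMeasure P]
    (μ : Measure (Fin p → ℝ)) (hμ : IsUniformOnSphere p μ)
    (w₁ w₂ : α → Fin p → ℝ)
    (hw₁meas : Measurable w₁) (hw₂meas : Measurable w₂)
    (hindep : IndepFun w₁ w₂ P)
    (hw₁law : Measure.map w₁ P = μ) (hw₂law : Measure.map w₂ P = μ)
    (A : Matrix (Fin p) (Fin p) ℝ) (hA : A.PosDef)
    (x₁ x₂ : α → Fin p → ℝ)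
    (hx₁ : ∀ ω, x₁ ω = (euclNorm (hA.posSemidef.sqrt *ᵥ w₁ ω))⁻¹ • (hA.posSemidef.sqrt *ᵥ w₁ ω))
    (hx₂ : ∀ ω, x₂ ω = (euclNorm (hA.posSemidef.sqrt *ᵥ w₂ ω))⁻¹ • (hA.posSemidef.sqrt *ᵥ w₂ ω))
    (T : ℕ → α → Matrix (Fin p) (Fin p) ℝ)
    (hTmeas : ∀ n i j, Measurable fun ω => T n ω i j)
    (hTpd : ∀ n ω, (T n ω).PosDef)
    (hTconv : ∀ᵐ ω ∂P, ∀ i j, Tendsto (fun n => T n ω i j) atTop (nhds (A i j)))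
    (t₁ t₂ : ℕ → α → Fin p → ℝ)
    (ht₁ : ∀ n ω, t₁ n ω = tylerNormalize (T n ω) (x₁ ω))
    (ht₂ : ∀ n ω, t₂ n ω = tylerNormalize (T n ω) (x₂ ω)) :
    ∀ k l : Fin p,
      Tendsto (fun n => ∫ ω, t₁ n ω k * t₂ n ω l ∂P) atTop (nhds 0) := by
  intro k l
  haveI : IsProbabilityMeasure μ := hμ.1
  -- the sphere has full measure for both variables
  have hball : MeasurableSet {w : Fin p → ℝ | euclNorm w = 1} :=
    (isClosed_eq continuous_euclNorm continuous_const).measurableSet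
  have hsph : ∀ (w : α → Fin p → ℝ), Measurable w → Measure.map w P = μ →
      ∀ᵐ ω ∂P, euclNorm (w ω) = 1 := by
    intro w hwm hwl
    have hμc : μ ({w : Fin p → ℝ | euclNorm w = 1}ᶜ) = 0 := by
      rw [measure_compl hball (measure_ne_top μ _), hμ.2.1, measure_univ]
      simp
    rw [ae_iff]
    have hset : {ω | ¬ euclNorm (w ω) = 1} = w ⁻¹' ({v : Fin p → ℝ | euclNorm v = 1}ᶜ) := rfl
    rw [hset, ← Measure.map_apply hwm hball.compl, hwl]
    exact hμc
  have hsph1 := hsph w₁ hw₁meas hw₁law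
  have hsph2 := hsph w₂ hw₂meas hw₂law
  -- a.e. pointwise limit
  have h_lim : ∀ᵐ ω ∂P, Tendsto (fun n => t₁ n ω k * t₂ n ω l) atTop
      (𝓝 (w₁ ω k * w₂ ω l)) := by
    filter_upwards [hsph1, hsph2, hTconv] with ω h1 h2 h3
    have hTt : Tendsto (fun n => T n ω) atTop (𝓝 A) := by
      refine tendsto_pi_nhds.mpr ?_
      intro i
      rw [tendsto_pi_nhds]
      intro j
      exact h3 i j
    have l1 : Tendsto (fun n => t₁ n ω) atTop (𝓝 (w₁ ω)) := by
      have := tendsto_tyler (fun n => hTpd n ω) hA hTt h1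
      simpa [ht₁, hx₁ ω] using this
    have l2 : Tendsto (fun n => t₂ n ω) atTop (𝓝 (w₂ ω)) := by
      have := tendsto_tyler (fun n => hTpd n ω) hA hTt h2
      simpa [ht₂, hx₂ ω] using this
    exact (tendsto_pi_nhds.mp l1 k).mul (tendsto_pi_nhds.mp l2 l)
  -- measurability
  have hTm : ∀ n, Measurable fun ω => T n ω := fun n =>
    measurable_pi_lambda _ fun i => measurable_pi_lambda _ fun j => hTmeas n i j
  have hxm : ∀ (w : α → Fin p → ℝ), Measurable w →
      Measurable fun ω => (euclNorm (hA.posSemidef.sqrt *ᵥ w ω))⁻¹ •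
        (hA.posSemidef.sqrt *ᵥ w ω) := by
    intro w hwm
    exact measurable_normalize.comp
      ((continuous_const.matrix_mulVec continuous_id).measurable.comp hwm)
  have hx₁m : Measurable x₁ := by
    have : x₁ = fun ω => (euclNorm (hA.posSemidef.sqrt *ᵥ w₁ ω))⁻¹ •
        (hA.posSemidef.sqrt *ᵥ w₁ ω) := funext hx₁
    rw [this]; exact hxm w₁ hw₁meas
  have hx₂m : Measurable x₂ := by
    have : x₂ = fun ω => (euclNorm (hA.posSemidef.sqrt *ᵥ w₂ ω))⁻¹ •
        (hA.posSemidef.sqrt *ᵥ w₂ ω) := funext hx₂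
    rw [this]; exact hxm w₂ hw₂meas
  have htm : ∀ (n : ℕ) (x : α → Fin p → ℝ), Measurable x →
      Measurable fun ω => tylerNormalize (T n ω) (x ω) := by
    intro n x hxmeas
    have heq : (fun ω => tylerNormalize (T n ω) (x ω)) =
        fun ω => (euclNorm ((sqrtFun (T n ω))⁻¹ *ᵥ x ω))⁻¹ • ((sqrtFun (T n ω))⁻¹ *ᵥ x ω) := by
      funext ω; rw [tylerNormalize_eq (hTpd n ω)]
    rw [heq]
    have hsqm : Measurable fun ω => (sqrtFun (T n ω))⁻¹ :=
      measurable_matrix_inv.comp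
        (measurable_sqrtFun_comp (hTm n) (fun ω => (hTpd n ω).posSemidef))
    exact measurable_normalize.comp (measurable_mulVec_comp hsqm hxmeas)
  have ht₁m : ∀ n, Measurable fun ω => t₁ n ω := by
    intro n
    have : (fun ω => t₁ n ω) = fun ω => tylerNormalize (T n ω) (x₁ ω) := funext (ht₁ n)
    rw [this]; exact htm n x₁ hx₁m
  have ht₂m : ∀ n, Measurable fun ω => t₂ n ω := by
    intro n
    have : (fun ω => t₂ n ω) = fun ω => tylerNormalize (T n ω) (x₂ ω) := funext (ht₂ n)
    rw [this]; exact htm n x₂ hx₂m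
  have F_meas : ∀ n, AEStronglyMeasurable (fun ω => t₁ n ω k * t₂ n ω l) P := fun n =>
    (((measurable_pi_apply k).comp (ht₁m n)).mul
      ((measurable_pi_apply l).comp (ht₂m n))).aestronglyMeasurable
  -- uniform bound
  have h_bound : ∀ n, ∀ᵐ ω ∂P, ‖t₁ n ω k * t₂ n ω l‖ ≤ (1 : ℝ) := by
    intro n
    apply Filter.Eventually.of_forall
    intro ω
    rw [Real.norm_eq_abs, abs_mul]
    have b1 : |t₁ n ω k| ≤ 1 := by rw [ht₁]; exact abs_tylerNormalize_le _ _ _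
    have b2 : |t₂ n ω l| ≤ 1 := by rw [ht₂]; exact abs_tylerNormalize_le _ _ _
    exact mul_le_one₀ b1 (abs_nonneg _) b2
  -- the limit integral vanishes by independence and symmetry
  have hmean : ∀ (w : α → Fin p → ℝ), Measurable w → Measure.map w P = μ →
      ∀ j : Fin p, ∫ ω, w ω j ∂P = 0 := by
    intro w hwm hwl j
    have hO : ((-1 : Matrix (Fin p) (Fin p) ℝ))ᵀ * (-1) = 1 := by simp
    have hμinv := hμ.2.2 (-1) hO
    have hneg : (fun v : Fin p → ℝ => (-1 : Matrix (Fin p) (Fin p) ℝ) *ᵥ v) =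
        fun v => -v := by
      funext v
      rw [Matrix.neg_mulVec, Matrix.one_mulVec]
    have e1 : ∫ v, v j ∂μ = ∫ v, ((-1 : Matrix (Fin p) (Fin p) ℝ) *ᵥ v) j ∂μ := by
      conv_lhs => rw [← hμinv]
      exact integral_map
        ((continuous_const.matrix_mulVec continuous_id).measurable.aemeasurable)
        ((measurable_pi_apply j).aestronglyMeasurable)
    have e2 : ∫ v, ((-1 : Matrix (Fin p) (Fin p) ℝ) *ᵥ v) j ∂μ = - ∫ v, v j ∂μ := by
      simp only [hneg, Pi.neg_apply]
      exact integral_neg _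
    have h0 : ∫ v, v j ∂μ = 0 := by
      have := e1.trans e2
      linarith
    have := integral_map (μ := P) hwm.aemeasurable
      ((measurable_pi_apply j).aestronglyMeasurable (μ := Measure.map w P)) (f := fun v : Fin p → ℝ => v j)
    rw [hwl] at this
    exact this.symm.trans h0
  have hindkl : IndepFun (fun ω => w₁ ω k) (fun ω => w₂ ω l) P :=
    hindep.comp (measurable_pi_apply k) (measurable_pi_apply l)
  have hprod : ∫ ω, w₁ ω k * w₂ ω l ∂P = 0 := by
    have hmul := hindkl.integral_fun_mul_eq_mul_integral
      ((measurable_pi_apply k).comp hw₁meas).aestronglyMeasurable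
      ((measurable_pi_apply l).comp hw₂meas).aestronglyMeasurable
    calc ∫ ω, w₁ ω k * w₂ ω l ∂P = (∫ ω, w₁ ω k ∂P) * ∫ ω, w₂ ω l ∂P := hmul
    _ = 0 := by rw [hmean w₁ hw₁meas hw₁law k, zero_mul]
  have hdom := tendsto_integral_of_dominated_convergence (μ := P)
    (F := fun n ω => t₁ n ω k * t₂ n ω l) (f := fun ω => w₁ ω k * w₂ ω l)
    (fun _ => (1 : ℝ)) F_meas (integrable_const 1) h_bound h_lim
  rw [hprod] at hdom
  exact hdom
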